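/- Let G be a group, T an element of the center of G, P a subset of G, and K an integer such that: (totality) for every β ∈ G either β ∈ P or β⁻¹T^K ∈ P; (transitivity) P is multiplicatively closed, i.e. a, b ∈ P implies ab ∈ P; (Archimedean) for every β ∈ G there is an integer k_β with β⁻¹T^{k_β} ∈ P and β⁻¹T^l ∉ P for every integer l ≤ −k_β. Then there exists a homogeneous quasimorphism f : G → ℝ such that f(T) = 1, f(β) ≥ 0 for all β ∈ P, and |f(ab) − f(a) − f(b)| ≤ K + 1 for all a, b ∈ G (so the defect of f is at most K + 1). -/

import Mathlib

open Filter Topology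

namespace DTCAux

variable {G : Type*} [Group G]

/-- The set of exponents `k` such that `g ≼ T^k`. -/
def SS (T : G) (P : Set G) (g : G) : Set ℤ := {k | g⁻¹ * T ^ k ∈ P}

/-- The least such exponent. -/
noncomputable def nu (T : G) (P : Set G) (g : G) : ℤ := sInf (SS T P g)

section Basic

variable {T : G} {P : Set G} {K : ℤ}

theorem commT (hT : T ∈ Subgroup.center G) (g : G) (k : ℤ) :
    g * T ^ k = T ^ k * g :=
  ((show Commute g T from Subgroup.mem_center_iff.mp hT g).zpow_right k).eq

theorem SS_nonempty
    (harch : ∀ β : G, ∃ k : ℤ, β⁻¹ * T ^ k ∈ P ∧ ∀ l : ℤ, l ≤ -k → β⁻¹ * T ^ l ∉ P)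
    (g : G) : (SS T P g).Nonempty := by
  obtain ⟨k, hk, -⟩ := harch g
  exact ⟨k, hk⟩

theorem SS_bddBelow
    (harch : ∀ β : G, ∃ k : ℤ, β⁻¹ * T ^ k ∈ P ∧ ∀ l : ℤ, l ≤ -k → β⁻¹ * T ^ l ∉ P)
    (g : G) : BddBelow (SS T P g) := by
  obtain ⟨k, -, hbd⟩ := harch g
  refine ⟨1 - k, fun m hm => ?_⟩
  by_contra h
  push_neg at h
  exact hbd m (by omega) hm

theorem nu_mem
    (harch : ∀ β : G, ∃ k : ℤ, β⁻¹ * T ^ k ∈ P ∧ ∀ l : ℤ, l ≤ -k → β⁻¹ * T ^ l ∉ P)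
    (g : G) : nu T P g ∈ SS T P g :=
  Int.csInf_mem (SS_nonempty harch g) (SS_bddBelow harch g)

theorem nu_le
    (harch : ∀ β : G, ∃ k : ℤ, β⁻¹ * T ^ k ∈ P ∧ ∀ l : ℤ, l ≤ -k → β⁻¹ * T ^ l ∉ P)
    {g : G} {k : ℤ} (hk : k ∈ SS T P g) : nu T P g ≤ k :=
  csInf_le (SS_bddBelow harch g) hk

theorem mem_mul (hT : T ∈ Subgroup.center G)
    (hmul : ∀ a b : G, a ∈ P → b ∈ P → a * b ∈ P)
    {g h : G} {k l : ℤ} (hk : k ∈ SS T P g) (hl : l ∈ SS T P h) :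
    k + l ∈ SS T P (g * h) := by
  have key : (g * h)⁻¹ * T ^ (k + l) = (h⁻¹ * T ^ l) * (g⁻¹ * T ^ k) := by
    rw [mul_inv_rev, zpow_add]
    calc h⁻¹ * g⁻¹ * (T ^ k * T ^ l)
        = h⁻¹ * (g⁻¹ * T ^ k * T ^ l) := by group
      _ = h⁻¹ * (T ^ l * (g⁻¹ * T ^ k)) := by
          rw [commT hT (g⁻¹ * T ^ k) l]
      _ = (h⁻¹ * T ^ l) * (g⁻¹ * T ^ k) := by group
  show (g * h)⁻¹ * T ^ (k + l) ∈ P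
  rw [key]
  exact hmul _ _ hl hk

theorem nu_mul_le (hT : T ∈ Subgroup.center G)
    (hmul : ∀ a b : G, a ∈ P → b ∈ P → a * b ∈ P)
    (harch : ∀ β : G, ∃ k : ℤ, β⁻¹ * T ^ k ∈ P ∧ ∀ l : ℤ, l ≤ -k → β⁻¹ * T ^ l ∉ P)
    (g h : G) : nu T P (g * h) ≤ nu T P g + nu T P h :=
  nu_le harch (mem_mul hT hmul (nu_mem harch g) (nu_mem harch h))

theorem nu_one_nonneg (hT : T ∈ Subgroup.center G)
    (hmul : ∀ a b : G, a ∈ P → b ∈ P → a * b ∈ P)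
    (harch : ∀ β : G, ∃ k : ℤ, β⁻¹ * T ^ k ∈ P ∧ ∀ l : ℤ, l ≤ -k → β⁻¹ * T ^ l ∉ P) :
    0 ≤ nu T P (1 : G) := by
  by_contra h
  push_neg at h
  set m := nu T P (1 : G) with hm
  -- all positive multiples of m are in SS T P 1
  have hmem : ∀ n : ℕ, ((n : ℤ) + 1) * m ∈ SS T P (1 : G) := by
    intro n
    induction n with
    | zero => simpa using nu_mem harch (1 : G)
    | succ n ih =>
      have := mem_mul hT hmul (nu_mem harch (1 : G)) ih
      rw [one_mul] at this
      convert this using 1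
      push_cast
      ring
  obtain ⟨k, -, hbd⟩ := harch (1 : G)
  have hn : ∃ n : ℕ, ((n : ℤ) + 1) * m ≤ -k := by
    refine ⟨k.toNat, ?_⟩
    have h1 : ((k.toNat : ℤ) + 1) * m ≤ -((k.toNat : ℤ) + 1) := by nlinarith
    have h2 : k ≤ (k.toNat : ℤ) := Int.self_le_toNat k
    omega
  obtain ⟨n, hn⟩ := hn
  exact hbd _ hn (hmem n)

theorem nu_add_inv_le (hT : T ∈ Subgroup.center G)
    (htot : ∀ β : G, β ∈ P ∨ β⁻¹ * T ^ K ∈ P)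
    (harch : ∀ β : G, ∃ k : ℤ, β⁻¹ * T ^ k ∈ P ∧ ∀ l : ℤ, l ≤ -k → β⁻¹ * T ^ l ∉ P)
    (g : G) : nu T P g + nu T P g⁻¹ ≤ K + 1 := by
  rcases htot (g⁻¹ * T ^ (nu T P g - 1)) with hc | hc
  · -- then nu g - 1 ∈ SS g, contradicting minimality
    have : nu T P g ≤ nu T P g - 1 := nu_le harch hc
    omega
  · -- (g⁻¹ T^{ν g - 1})⁻¹ T^K = g T^{K - ν g + 1} ∈ P
    have key : (g⁻¹ * T ^ (nu T P g - 1))⁻¹ * T ^ K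
        = (g⁻¹)⁻¹ * T ^ (K - nu T P g + 1) := by
      simp only [mul_inv_rev, inv_inv]
      rw [← zpow_neg, ← commT hT g (-(nu T P g - 1)), mul_assoc, ← zpow_add]
      congr 1
      ring
    rw [key] at hc
    have : nu T P g⁻¹ ≤ K - nu T P g + 1 := nu_le harch hc
    omega

theorem nu_one_le_add (hT : T ∈ Subgroup.center G)
    (hmul : ∀ a b : G, a ∈ P → b ∈ P → a * b ∈ P)
    (harch : ∀ β : G, ∃ k : ℤ, β⁻¹ * T ^ k ∈ P ∧ ∀ l : ℤ, l ≤ -k → β⁻¹ * T ^ l ∉ P)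
    (g : G) : nu T P (1 : G) ≤ nu T P g + nu T P g⁻¹ := by
  have := nu_mul_le hT hmul harch g g⁻¹
  rwa [mul_inv_cancel] at this

theorem nu_pow_le (hT : T ∈ Subgroup.center G)
    (hmul : ∀ a b : G, a ∈ P → b ∈ P → a * b ∈ P)
    (harch : ∀ β : G, ∃ k : ℤ, β⁻¹ * T ^ k ∈ P ∧ ∀ l : ℤ, l ≤ -k → β⁻¹ * T ^ l ∉ P)
    (g : G) : ∀ n : ℕ, nu T P (g ^ (n + 1)) ≤ ((n : ℤ) + 1) * nu T P g := by
  intro n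
  induction n with
  | zero => simp
  | succ n ih =>
    have h1 : nu T P (g ^ (n + 1 + 1)) ≤ nu T P (g ^ (n + 1)) + nu T P g := by
      have := nu_mul_le hT hmul harch (g ^ (n + 1)) g
      rwa [← pow_succ] at this
    push_cast
    calc nu T P (g ^ (n + 1 + 1)) ≤ nu T P (g ^ (n + 1)) + nu T P g := h1
      _ ≤ ((n : ℤ) + 1) * nu T P g + nu T P g := by linarith [ih]
      _ = ((n : ℤ) + 1 + 1) * nu T P g := by ring

end Basic

end DTCAux

/-- Existence of a homogeneous quasimorphism with `f T = 1`, nonnegative on the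
set of positive elements `P`, and of defect at most `K + 1`, given totality,
transitivity and the Archimedean property. -/
theorem dtc_existence {G : Type*} [Group G] (T : G) (hT : T ∈ Subgroup.center G)
    (P : Set G) (K : ℤ)
    (htot : ∀ β : G, β ∈ P ∨ β⁻¹ * T ^ K ∈ P)
    (hmul : ∀ a b : G, a ∈ P → b ∈ P → a * b ∈ P)
    (harch : ∀ β : G, ∃ k : ℤ, β⁻¹ * T ^ k ∈ P ∧ ∀ l : ℤ, l ≤ -k → β⁻¹ * T ^ l ∉ P) :
    ∃ f : G → ℝ,
      (∀ (x : G) (k : ℤ), f (x ^ k) = k * f x) ∧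
      f T = 1 ∧
      (∀ β ∈ P, 0 ≤ f β) ∧
      (∀ a b : G, |f (a * b) - f a - f b| ≤ (K : ℝ) + 1) := by
  classical
  open DTCAux in
  set ν : G → ℤ := DTCAux.nu T P with hν
  -- subadditivity of n ↦ ν (g ^ n)
  have hsub : ∀ g : G, Subadditive (fun n : ℕ => ((ν (g ^ n) : ℤ) : ℝ)) := by
    intro g m n
    show ((ν (g ^ (m + n)) : ℤ) : ℝ) ≤ ((ν (g ^ m) : ℤ) : ℝ) + ((ν (g ^ n) : ℤ) : ℝ)
    have := DTCAux.nu_mul_le hT hmul harch (g ^ m) (g ^ n)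
    rw [← pow_add] at this
    exact_mod_cast this
  have hgapl : ∀ g : G, (0 : ℤ) ≤ ν g + ν g⁻¹ := fun g =>
    le_trans (DTCAux.nu_one_nonneg hT hmul harch)
      (DTCAux.nu_one_le_add hT hmul harch g)
  have hgapu : ∀ g : G, ν g + ν g⁻¹ ≤ K + 1 := fun g =>
    DTCAux.nu_add_inv_le hT htot harch g
  have hpowle : ∀ (g : G) (n : ℕ), ν (g ^ (n + 1)) ≤ ((n : ℤ) + 1) * ν g :=
    fun g n => DTCAux.nu_pow_le hT hmul harch g n
  have hpowge : ∀ (g : G) (n : ℕ), -(((n : ℤ) + 1) * ν g⁻¹) ≤ ν (g ^ (n + 1)) := by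
    intro g n
    have h1 : (0 : ℤ) ≤ ν (g ^ (n + 1)) + ν ((g ^ (n + 1))⁻¹) := hgapl _
    have h2 : ν ((g ^ (n + 1))⁻¹) ≤ ((n : ℤ) + 1) * ν g⁻¹ := by
      have := hpowle g⁻¹ n
      rwa [inv_pow] at this
    linarith
  -- boundedness below of the ratio sequence
  have hbdd : ∀ g : G,
      BddBelow (Set.range fun n : ℕ => ((ν (g ^ n) : ℤ) : ℝ) / n) := by
    intro g
    refine ⟨min 0 (-((ν g⁻¹ : ℤ) : ℝ)), ?_⟩
    rintro x ⟨n, rfl⟩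
    cases n with
    | zero => simpa using min_le_left 0 (-((ν g⁻¹ : ℤ) : ℝ))
    | succ n =>
      refine le_trans (min_le_right _ _) ?_
      show -((ν g⁻¹ : ℤ) : ℝ) ≤ ((ν (g ^ (n + 1)) : ℤ) : ℝ) / ((n + 1 : ℕ) : ℝ)
      have hpos : (0 : ℝ) < ((n + 1 : ℕ) : ℝ) := by positivity
      have key : (-(((n : ℤ) + 1) * ν g⁻¹) : ℝ) ≤ ((ν (g ^ (n + 1)) : ℤ) : ℝ) := by
        exact_mod_cast hpowge g n
      rw [le_div_iff₀ hpos]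
      push_cast at key ⊢
      nlinarith [key]
  set F : G → ℝ := fun g => Subadditive.lim (hsub g) with hF
  have hlim : ∀ g : G,
      Filter.Tendsto (fun n : ℕ => ((ν (g ^ n) : ℤ) : ℝ) / n) Filter.atTop (𝓝 (F g)) :=
    fun g => (hsub g).tendsto_lim (hbdd g)
  -- F g ≤ ν g
  have hFle : ∀ g : G, F g ≤ ((ν g : ℤ) : ℝ) := by
    intro g
    refine le_of_tendsto (hlim g) ?_
    filter_upwards [Filter.eventually_ge_atTop 1] with n hn
    obtain ⟨m, rfl⟩ : ∃ m, n = m + 1 := ⟨n - 1, by omega⟩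
    show ((ν (g ^ (m + 1)) : ℤ) : ℝ) / ((m + 1 : ℕ) : ℝ) ≤ ((ν g : ℤ) : ℝ)
    have hpos : (0 : ℝ) < ((m + 1 : ℕ) : ℝ) := by positivity
    rw [div_le_iff₀ hpos]
    have h1' : ((ν (g ^ (m + 1)) : ℤ) : ℝ) ≤ ((m : ℝ) + 1) * ((ν g : ℤ) : ℝ) := by
      exact_mod_cast hpowle g m
    push_cast
    push_cast at h1'
    nlinarith [h1']
  -- F 1 = 0
  have hFone : F 1 = 0 := by
    have h2 : Filter.Tendsto (fun n : ℕ => ((ν ((1 : G) ^ n) : ℤ) : ℝ) / n)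
        Filter.atTop (𝓝 0) := by
      have : (fun n : ℕ => ((ν ((1 : G) ^ n) : ℤ) : ℝ) / n)
          = fun n : ℕ => ((ν (1 : G) : ℤ) : ℝ) / n := by
        funext n; rw [one_pow]
      rw [this]
      exact tendsto_const_div_atTop_nhds_zero_nat _
    exact tendsto_nhds_unique (hlim 1) h2
  -- F g + F g⁻¹ = 0
  have hFaddinv : ∀ g : G, F g + F g⁻¹ = 0 := by
    intro g
    have h1 : Filter.Tendsto
        (fun n : ℕ => ((ν (g ^ n) : ℤ) : ℝ) / n + ((ν (g⁻¹ ^ n) : ℤ) : ℝ) / n)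
        Filter.atTop (𝓝 (F g + F g⁻¹)) := (hlim g).add (hlim g⁻¹)
    have h2 : Filter.Tendsto
        (fun n : ℕ => ((ν (g ^ n) : ℤ) : ℝ) / n + ((ν (g⁻¹ ^ n) : ℤ) : ℝ) / n)
        Filter.atTop (𝓝 0) := by
      apply tendsto_of_tendsto_of_tendsto_of_le_of_le'
        (tendsto_const_nhds : Filter.Tendsto (fun _ : ℕ => (0 : ℝ)) _ _)
        (tendsto_const_div_atTop_nhds_zero_nat ((K : ℝ) + 1))
      · filter_upwards [Filter.eventually_ge_atTop 1] with n hn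
        have hnn : (0 : ℝ) ≤ (n : ℝ) := by positivity
        have hsum : (0 : ℤ) ≤ ν (g ^ n) + ν (g⁻¹ ^ n) := by
          have := hgapl (g ^ n)
          rwa [← inv_pow] at this
        rw [← add_div]
        apply div_nonneg _ hnn
        exact_mod_cast hsum
      · filter_upwards [Filter.eventually_ge_atTop 1] with n hn
        have hnpos : (0 : ℝ) < (n : ℝ) := by
          have : (1 : ℝ) ≤ (n : ℝ) := by exact_mod_cast hn
          linarith
        have hsum : ν (g ^ n) + ν (g⁻¹ ^ n) ≤ K + 1 := by
          have := hgapu (g ^ n)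
          rwa [← inv_pow] at this
        rw [← add_div]
        refine (div_le_div_iff_of_pos_right hnpos).mpr ?_
        exact_mod_cast hsum
    have := tendsto_nhds_unique h1 h2
    linarith [this]
  have hFneg : ∀ g : G, F g⁻¹ = -F g := by
    intro g; have := hFaddinv g; linarith
  -- homogeneity for positive natural powers
  have hFpow : ∀ (g : G) (m : ℕ), F (g ^ (m + 1)) = ((m : ℝ) + 1) * F g := by
    intro g m
    have hmono : Filter.Tendsto (fun n : ℕ => (m + 1) * n) Filter.atTop Filter.atTop :=
      Filter.tendsto_atTop_mono (fun n => Nat.le_mul_of_pos_left n (Nat.succ_pos m))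
        Filter.tendsto_id
    have hcomp := (hlim g).comp hmono
    have hmul' := hcomp.const_mul ((m : ℝ) + 1)
    rw [mul_comm] at hmul'
    refine tendsto_nhds_unique (hlim (g ^ (m + 1))) ?_
    rw [show F g * ((m : ℝ) + 1) = ((m : ℝ) + 1) * F g from mul_comm _ _] at hmul'
    refine hmul'.congr fun n => ?_
    show ((m : ℝ) + 1) * (((ν (g ^ ((m + 1) * n)) : ℤ) : ℝ) / (((m + 1) * n : ℕ) : ℝ))
        = ((ν ((g ^ (m + 1)) ^ n) : ℤ) : ℝ) / (n : ℝ)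
    rw [← pow_mul]
    have h0 : ((m : ℝ) + 1) ≠ 0 := by positivity
    push_cast
    rw [mul_div_assoc', mul_div_mul_left _ _ h0]
  -- homogeneity for integer powers
  have hzpow : ∀ (x : G) (k : ℤ), F (x ^ k) = (k : ℝ) * F x := by
    intro x k
    have hnat : ∀ m : ℕ, F (x ^ m) = (m : ℝ) * F x := by
      intro m
      cases m with
      | zero => simpa using hFone
      | succ m => simpa using hFpow x m
    rcases Int.natAbs_eq k with hk | hk
    · rw [hk, zpow_natCast, hnat]
      norm_cast
      congr 1
      rw [Int.abs_eq_natAbs]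
      exact (Int.cast_natCast _).symm
    · rw [hk, zpow_neg, zpow_natCast, hFneg, hnat, Int.cast_neg, Int.cast_natCast]
      ring
  -- value at T
  have hnuT : ∀ n : ℕ, ν (T ^ n) = (n : ℤ) + ν 1 := by
    intro n
    have hmem1 : ((n : ℤ) + ν (1 : G)) ∈ DTCAux.SS T P (T ^ n) := by
      show (T ^ n)⁻¹ * T ^ ((n : ℤ) + ν (1 : G)) ∈ P
      have h1 := DTCAux.nu_mem harch (1 : G)
      have key : (T ^ n)⁻¹ * T ^ ((n : ℤ) + ν (1 : G)) = T ^ (ν (1 : G)) := by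
        rw [← zpow_natCast T n, ← zpow_neg, ← zpow_add]
        congr 1
        ring
      rw [key]
      have : (1 : G)⁻¹ * T ^ (ν (1 : G)) ∈ P := h1
      rwa [inv_one, one_mul] at this
    have hmem2 : (ν (T ^ n) - (n : ℤ)) ∈ DTCAux.SS T P (1 : G) := by
      show (1 : G)⁻¹ * T ^ (ν (T ^ n) - (n : ℤ)) ∈ P
      have h1 : (T ^ n)⁻¹ * T ^ (ν (T ^ n)) ∈ P := DTCAux.nu_mem harch (T ^ n)
      have key : (T ^ n)⁻¹ * T ^ (ν (T ^ n)) = T ^ (ν (T ^ n) - (n : ℤ)) := by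
        rw [← zpow_natCast T n, ← zpow_neg, ← zpow_add]
        congr 1
        ring
      rw [key] at h1
      rwa [inv_one, one_mul]
    have h2 : ν (T ^ n) ≤ (n : ℤ) + ν (1 : G) := DTCAux.nu_le harch hmem1
    have h3 : ν (1 : G) ≤ ν (T ^ n) - (n : ℤ) := DTCAux.nu_le harch hmem2
    omega
  have hFT : F T = 1 := by
    have h2 : Filter.Tendsto (fun n : ℕ => ((ν (T ^ n) : ℤ) : ℝ) / n)
        Filter.atTop (𝓝 1) := by
      have hbase : Filter.Tendsto (fun n : ℕ => (1 : ℝ) + ((ν (1 : G) : ℤ) : ℝ) / n)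
          Filter.atTop (𝓝 (1 + 0)) :=
        tendsto_const_nhds.add (tendsto_const_div_atTop_nhds_zero_nat _)
      rw [add_zero] at hbase
      refine hbase.congr' ?_
      filter_upwards [Filter.eventually_ge_atTop 1] with n hn
      have hnpos : (0 : ℝ) < (n : ℝ) := by exact_mod_cast Nat.lt_of_lt_of_le Nat.zero_lt_one hn
      have hn0 : ((n : ℝ)) ≠ 0 := ne_of_gt hnpos
      rw [hnuT n]
      push_cast
      field_simp
    exact tendsto_nhds_unique (hlim T) h2
  -- nonnegativity on P
  have hFP : ∀ β ∈ P, 0 ≤ F β := by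
    intro β hβ
    have hpows : ∀ n : ℕ, β ^ (n + 1) ∈ P := by
      intro n
      induction n with
      | zero => simpa using hβ
      | succ n ih =>
        have := hmul _ _ ih hβ
        rwa [← pow_succ] at this
    have hνn : ∀ n : ℕ, ν (β⁻¹ ^ (n + 1)) ≤ 0 := by
      intro n
      refine DTCAux.nu_le harch ?_
      show (β⁻¹ ^ (n + 1))⁻¹ * T ^ (0 : ℤ) ∈ P
      rw [zpow_zero, mul_one, inv_pow, inv_inv]
      exact hpows n
    have hneg : F β⁻¹ ≤ 0 := by
      refine le_of_tendsto (hlim β⁻¹) ?_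
      filter_upwards [Filter.eventually_ge_atTop 1] with n hn
      obtain ⟨m, rfl⟩ : ∃ m, n = m + 1 := ⟨n - 1, by omega⟩
      show ((ν (β⁻¹ ^ (m + 1)) : ℤ) : ℝ) / ((m + 1 : ℕ) : ℝ) ≤ 0
      apply div_nonpos_of_nonpos_of_nonneg
      · exact_mod_cast hνn m
      · positivity
    have := hFneg β
    linarith
  -- conjugation invariance
  have hconj_le : ∀ w g : G, F (w * g * w⁻¹) ≤ F g := by
    intro w g
    have hB : Filter.Tendsto (fun n : ℕ =>
        (((ν w : ℤ) : ℝ) + ((ν w⁻¹ : ℤ) : ℝ)) / n + ((ν (g ^ n) : ℤ) : ℝ) / n)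
        Filter.atTop (𝓝 (0 + F g)) :=
      (tendsto_const_div_atTop_nhds_zero_nat _).add (hlim g)
    rw [zero_add] at hB
    refine le_of_tendsto_of_tendsto (hlim (w * g * w⁻¹)) hB ?_
    filter_upwards [Filter.eventually_ge_atTop 1] with n hn
    show ((ν ((w * g * w⁻¹) ^ n) : ℤ) : ℝ) / n
        ≤ (((ν w : ℤ) : ℝ) + ((ν w⁻¹ : ℤ) : ℝ)) / n + ((ν (g ^ n) : ℤ) : ℝ) / n
    have hnpos : (0 : ℝ) < (n : ℝ) := by exact_mod_cast Nat.lt_of_lt_of_le Nat.zero_lt_one hn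
    have hA : ν ((w * g * w⁻¹) ^ n) ≤ ν w + ν (g ^ n) + ν w⁻¹ := by
      rw [conj_pow]
      calc ν (w * g ^ n * w⁻¹) ≤ ν (w * g ^ n) + ν w⁻¹ :=
            DTCAux.nu_mul_le hT hmul harch _ _
        _ ≤ ν w + ν (g ^ n) + ν w⁻¹ := by
            have h5 : ν (w * g ^ n) ≤ ν w + ν (g ^ n) :=
              DTCAux.nu_mul_le hT hmul harch w (g ^ n)
            omega
    rw [← add_div]
    refine (div_le_div_iff_of_pos_right hnpos).mpr ?_
    have hA' : ((ν ((w * g * w⁻¹) ^ n) : ℤ) : ℝ)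
        ≤ ((ν w : ℤ) : ℝ) + ((ν (g ^ n) : ℤ) : ℝ) + ((ν w⁻¹ : ℤ) : ℝ) := by
      exact_mod_cast hA
    linarith
  have hconj : ∀ w g : G, F (w * g * w⁻¹) = F g := by
    intro w g
    refine le_antisymm (hconj_le w g) ?_
    have h := hconj_le w⁻¹ (w * g * w⁻¹)
    rw [show w⁻¹ * (w * g * w⁻¹) * w⁻¹⁻¹ = g by group] at h
    exact h
  -- ν is within K+1 of F
  have hnuleF : ∀ g : G, ((ν g : ℤ) : ℝ) ≤ F g + ((K : ℝ) + 1) := by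
    intro g
    have h1 : ((ν g : ℤ) : ℝ) + ((ν g⁻¹ : ℤ) : ℝ) ≤ (K : ℝ) + 1 := by
      exact_mod_cast hgapu g
    have h2 := hFle g⁻¹
    have h3 := hFneg g
    linarith
  -- the key unshuffling estimate
  have hkey : ∀ a b : G, ∀ n : ℕ,
      ((ν ((b⁻¹) ^ n * (a * b) ^ n) : ℤ) : ℝ)
        ≤ (n : ℝ) * (F a + ((K : ℝ) + 1)) + ((ν (1 : G) : ℤ) : ℝ) := by
    intro a b n
    induction n with
    | zero => simp
    | succ n ih =>
      have hid : (b⁻¹) ^ (n + 1) * (a * b) ^ (n + 1)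
          = ((b⁻¹) ^ (n + 1) * a * ((b⁻¹) ^ (n + 1))⁻¹) * ((b⁻¹) ^ n * (a * b) ^ n) := by
        simp only [inv_pow, inv_inv]
        simp only [mul_assoc]
        congr 1
        rw [show b ^ (n + 1) * ((b ^ n)⁻¹ * (a * b) ^ n) = b * (a * b) ^ n by
          rw [← mul_assoc, pow_succ', mul_inv_cancel_right]]
        rw [← mul_assoc, ← pow_succ']
      have h1 : ν ((b⁻¹) ^ (n + 1) * (a * b) ^ (n + 1))
          ≤ ν ((b⁻¹) ^ (n + 1) * a * ((b⁻¹) ^ (n + 1))⁻¹)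
            + ν ((b⁻¹) ^ n * (a * b) ^ n) := by
        rw [hid]
        exact DTCAux.nu_mul_le hT hmul harch _ _
      have h2 : ((ν ((b⁻¹) ^ (n + 1) * a * ((b⁻¹) ^ (n + 1))⁻¹) : ℤ) : ℝ)
          ≤ F a + ((K : ℝ) + 1) := by
        have := hnuleF ((b⁻¹) ^ (n + 1) * a * ((b⁻¹) ^ (n + 1))⁻¹)
        rwa [hconj ((b⁻¹) ^ (n + 1)) a] at this
      have h1' : ((ν ((b⁻¹) ^ (n + 1) * (a * b) ^ (n + 1)) : ℤ) : ℝ)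
          ≤ ((ν ((b⁻¹) ^ (n + 1) * a * ((b⁻¹) ^ (n + 1))⁻¹) : ℤ) : ℝ)
            + ((ν ((b⁻¹) ^ n * (a * b) ^ n) : ℤ) : ℝ) := by exact_mod_cast h1
      push_cast
      push_cast at ih
      nlinarith [h1', h2, ih]
  -- the upper defect bound
  have hupper : ∀ a b : G, F (a * b) ≤ F a + F b + ((K : ℝ) + 1) := by
    intro a b
    have hB : Filter.Tendsto (fun n : ℕ =>
        ((ν (b ^ n) : ℤ) : ℝ) / n + ((F a + ((K : ℝ) + 1)) + ((ν (1 : G) : ℤ) : ℝ) / n))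
        Filter.atTop (𝓝 (F b + ((F a + ((K : ℝ) + 1)) + 0))) :=
      (hlim b).add (tendsto_const_nhds.add (tendsto_const_div_atTop_nhds_zero_nat _))
    have hle : ∀ᶠ n : ℕ in Filter.atTop,
        ((ν ((a * b) ^ n) : ℤ) : ℝ) / n
          ≤ ((ν (b ^ n) : ℤ) : ℝ) / n
            + ((F a + ((K : ℝ) + 1)) + ((ν (1 : G) : ℤ) : ℝ) / n) := by
      filter_upwards [Filter.eventually_ge_atTop 1] with n hn
      have hnpos : (0 : ℝ) < (n : ℝ) := by exact_mod_cast Nat.lt_of_lt_of_le Nat.zero_lt_one hn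
      have hn0 : ((n : ℝ)) ≠ 0 := ne_of_gt hnpos
      have hid2 : (a * b) ^ n = b ^ n * ((b⁻¹) ^ n * (a * b) ^ n) := by
        rw [← mul_assoc, inv_pow, mul_inv_cancel, one_mul]
      have h1 : ν ((a * b) ^ n) ≤ ν (b ^ n) + ν ((b⁻¹) ^ n * (a * b) ^ n) := by
        nth_rewrite 1 [hid2]
        exact DTCAux.nu_mul_le hT hmul harch _ _
      have h1' : ((ν ((a * b) ^ n) : ℤ) : ℝ)
          ≤ ((ν (b ^ n) : ℤ) : ℝ) + ((ν ((b⁻¹) ^ n * (a * b) ^ n) : ℤ) : ℝ) := by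
        exact_mod_cast h1
      have h2 := hkey a b n
      calc ((ν ((a * b) ^ n) : ℤ) : ℝ) / n
          ≤ (((ν (b ^ n) : ℤ) : ℝ)
              + ((n : ℝ) * (F a + ((K : ℝ) + 1)) + ((ν (1 : G) : ℤ) : ℝ))) / n := by
            refine (div_le_div_iff_of_pos_right hnpos).mpr ?_
            linarith
        _ = ((ν (b ^ n) : ℤ) : ℝ) / n
              + ((F a + ((K : ℝ) + 1)) + ((ν (1 : G) : ℤ) : ℝ) / n) := by
            field_simp
    have := le_of_tendsto_of_tendsto (hlim (a * b)) hB hle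
    linarith
  -- assemble
  refine ⟨F, hzpow, hFT, hFP, ?_⟩
  intro a b
  have hup := hupper a b
  have hlow : -((K : ℝ) + 1) ≤ F (a * b) - F a - F b := by
    have h := hupper b⁻¹ a⁻¹
    rw [← mul_inv_rev] at h
    rw [hFneg (a * b), hFneg a, hFneg b] at h
    linarith
  rw [abs_le]
  constructor <;> linarith
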